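/- Let φ : ℝ^d → ℝ^N be twice continuously differentiable, let θ ∈ ℝ^N and c ∈ ℝ, and let q_θ(x) = exp(⟨θ, φ(x)⟩ + c). Then for every x ∈ ℝ^d the Hyvärinen score satisfies h(x, q_θ) := (1/2)‖∇_x log q_θ(x)‖₂² + Δ log q_θ(x) = (1/2) θᵀ A(x) θ + K(x)ᵀ θ, where A(x) := Σ_{i=1}^d (∂_i φ(x))(∂_i φ(x))ᵀ and K(x) := Σ_{i=1}^d ∂_i² φ(x). Moreover A(x) is symmetric positive semidefinite, so for each fixed x the map θ ↦ h(x, q_θ) is a convex quadratic function of the natural parameters. -/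

import Mathlib

/-- Partial derivative in coordinate `i`. -/
noncomputable def pd {d : ℕ} (i : Fin d) (f : (Fin d → ℝ) → ℝ) (x : Fin d → ℝ) : ℝ :=
  fderiv ℝ f x (Pi.single i 1)

/-- The Hyvärinen score `h(x,q) = (1/2)‖∇ log q(x)‖₂² + Δ log q(x)` on `ℝ^d`. -/
noncomputable def hyv {d : ℕ} (q : (Fin d → ℝ) → ℝ) (x : Fin d → ℝ) : ℝ :=
  (1/2) * ∑ i : Fin d, (pd i (fun y => Real.log (q y)) x)^2
    + ∑ i : Fin d, pd i (pd i (fun y => Real.log (q y))) x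

section aux
variable {d N : ℕ}

lemma comp_contDiff {φ : (Fin d → ℝ) → Fin N → ℝ} (hφ : ContDiff ℝ 2 φ) (a : Fin N) :
    ContDiff ℝ 2 (fun y => φ y a) :=
  ((ContinuousLinearMap.proj a : ((Fin N → ℝ) →L[ℝ] ℝ)).contDiff).comp hφ

lemma pd_contDiff {f : (Fin d → ℝ) → ℝ} (hf : ContDiff ℝ 2 f) (i : Fin d) :
    ContDiff ℝ 1 (pd i f) := by
  have h1 : ContDiff ℝ 1 (fderiv ℝ f) := hf.fderiv_right (by norm_num)
  exact h1.clm_apply contDiff_const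

lemma pd_comb' {f : Fin N → (Fin d → ℝ) → ℝ} {x : Fin d → ℝ}
    (hf : ∀ a, DifferentiableAt ℝ (f a) x) (θ : Fin N → ℝ) (i : Fin d) :
    pd i (fun y => ∑ a, θ a * f a y) x = ∑ a, θ a * pd i (f a) x := by
  unfold pd
  rw [fderiv_fun_sum (fun a _ => ((hf a).const_mul (θ a)))]
  rw [ContinuousLinearMap.sum_apply]
  congr 1; ext a
  rw [fderiv_const_mul (hf a)]
  simp

lemma pd_comb {f : Fin N → (Fin d → ℝ) → ℝ} {x : Fin d → ℝ}
    (hf : ∀ a, DifferentiableAt ℝ (f a) x) (θ : Fin N → ℝ) (c : ℝ) (i : Fin d) :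
    pd i (fun y => (∑ a, θ a * f a y) + c) x = ∑ a, θ a * pd i (f a) x := by
  unfold pd
  rw [fderiv_add_const]
  exact pd_comb' hf θ i

lemma convexOn_finsum {ι : Type*} (t : Finset ι) (f : ι → (Fin N → ℝ) → ℝ)
    (hf : ∀ i ∈ t, ConvexOn ℝ Set.univ (f i)) :
    ConvexOn ℝ Set.univ (fun θ' => ∑ i ∈ t, f i θ') := by
  classical
  induction t using Finset.induction with
  | empty => simpa using convexOn_const (0:ℝ) convex_univ
  | @insert j s hni ih =>
    simp only [Finset.sum_insert hni]
    exact (hf j (Finset.mem_insert_self _ _)).add (ih fun i hi => hf i (Finset.mem_insert_of_mem hi))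

lemma convexOn_sq_linear (g : Fin N → ℝ) :
    ConvexOn ℝ Set.univ (fun θ' : Fin N → ℝ => (∑ a, θ' a * g a)^2) := by
  let L : (Fin N → ℝ) →ₗ[ℝ] ℝ :=
    { toFun := fun θ' => ∑ a, θ' a * g a
      map_add' := by intro u v; simp [add_mul, Finset.sum_add_distrib]
      map_smul' := by intro r u; simp [Finset.mul_sum, mul_assoc] }
  have h := (Even.convexOn_pow (𝕜 := ℝ) even_two).comp_affineMap L.toAffineMap
  simpa [L, Function.comp_def] using h

lemma convexOn_linpart (K : Fin N → ℝ) :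
    ConvexOn ℝ Set.univ (fun θ' : Fin N → ℝ => ∑ a, K a * θ' a) := by
  refine ⟨convex_univ, fun u _ v _ a b _ _ _ => le_of_eq ?_⟩
  simp only [smul_eq_mul, Pi.add_apply, Pi.smul_apply, Finset.mul_sum,
    ← Finset.sum_add_distrib]
  exact Finset.sum_congr rfl fun c _ => by ring

lemma key_sum (g : Fin d → Fin N → ℝ) (θ : Fin N → ℝ) :
    ∑ i, (∑ a, θ a * g i a)^2
      = ∑ a, ∑ b, θ a * (∑ i, g i a * g i b) * θ b := by
  have h1 : ∀ i, (∑ a, θ a * g i a)^2 = ∑ a, ∑ b, θ a * (g i a * g i b) * θ b := by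
    intro i
    rw [sq, Finset.sum_mul_sum]
    exact Finset.sum_congr rfl fun a _ => Finset.sum_congr rfl fun b _ => by ring
  rw [Finset.sum_congr rfl fun i _ => h1 i, Finset.sum_comm]
  refine Finset.sum_congr rfl fun a _ => ?_
  rw [Finset.sum_comm]
  refine Finset.sum_congr rfl fun b _ => ?_
  simp [Finset.mul_sum, Finset.sum_mul]

lemma hyv_exp (φ : (Fin d → ℝ) → Fin N → ℝ) (hφ : ContDiff ℝ 2 φ)
    (θ : Fin N → ℝ) (c : ℝ) (x : Fin d → ℝ) :
    hyv (fun y => Real.exp ((∑ a : Fin N, θ a * φ y a) + c)) x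
      = (1/2) * ∑ i : Fin d, (∑ a, θ a * pd i (fun y => φ y a) x)^2
        + ∑ a : Fin N, (∑ i : Fin d, pd i (pd i (fun y => φ y a)) x) * θ a := by
  have hlog : (fun y => Real.log (Real.exp ((∑ a : Fin N, θ a * φ y a) + c)))
      = fun y => (∑ a : Fin N, θ a * φ y a) + c := by
    funext y; exact Real.log_exp _
  have hda : ∀ (a : Fin N) (z : Fin d → ℝ), DifferentiableAt ℝ (fun y => φ y a) z :=
    fun a z => ((comp_contDiff hφ a).differentiable (by norm_num)).differentiableAt
  have hpd1 : ∀ i z, pd i (fun y => (∑ a : Fin N, θ a * φ y a) + c) z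
      = ∑ a, θ a * pd i (fun y => φ y a) z :=
    fun i z => pd_comb (fun a => hda a z) θ c i
  have hpd2 : ∀ i : Fin d, pd i (pd i (fun y => (∑ a : Fin N, θ a * φ y a) + c)) x
      = ∑ a, θ a * pd i (pd i (fun y => φ y a)) x := by
    intro i
    have : pd i (fun y => (∑ a : Fin N, θ a * φ y a) + c)
        = fun z => ∑ a, θ a * pd i (fun y => φ y a) z := funext fun z => hpd1 i z
    rw [this]
    exact pd_comb' (fun a =>
      ((pd_contDiff (comp_contDiff hφ a) i).differentiable one_ne_zero).differentiableAt) θ i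
  unfold hyv
  simp only [hlog, hpd1, hpd2]
  congr 1
  rw [Finset.sum_comm]
  refine Finset.sum_congr rfl fun a _ => ?_
  rw [Finset.sum_mul]
  exact Finset.sum_congr rfl fun i _ => by ring
end aux

/-- For the exponential family `q_θ(x) = exp(⟨θ, φ(x)⟩ + c)` with `φ` twice continuously
differentiable, the Hyvärinen score is the quadratic `h(x,q_θ) = (1/2) θᵀA(x)θ + K(x)ᵀθ`,
with `A(x) = ∑ i (∂_i φ)(∂_i φ)ᵀ` symmetric positive semidefinite and
`K(x) = ∑ i ∂_i² φ`; hence `θ ↦ h(x,q_θ)` is a convex quadratic in the natural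
parameters. -/
theorem stmt3 {d N : ℕ} (φ : (Fin d → ℝ) → Fin N → ℝ) (hφ : ContDiff ℝ 2 φ)
    (θ : Fin N → ℝ) (c : ℝ) :
    (∀ x : Fin d → ℝ,
      hyv (fun y => Real.exp ((∑ a : Fin N, θ a * φ y a) + c)) x
        = (1/2) * (∑ a : Fin N, ∑ b : Fin N,
              θ a * (∑ i : Fin d, pd i (fun y => φ y a) x * pd i (fun y => φ y b) x) * θ b)
          + ∑ a : Fin N, (∑ i : Fin d, pd i (pd i (fun y => φ y a)) x) * θ a)
    ∧ (∀ x : Fin d → ℝ,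
        (Matrix.of fun a b : Fin N =>
          ∑ i : Fin d, pd i (fun y => φ y a) x * pd i (fun y => φ y b) x).IsSymm)
    ∧ (∀ x : Fin d → ℝ,
        (Matrix.of fun a b : Fin N =>
          ∑ i : Fin d, pd i (fun y => φ y a) x * pd i (fun y => φ y b) x).PosSemidef)
    ∧ (∀ x : Fin d → ℝ,
        ConvexOn ℝ Set.univ (fun θ' : Fin N → ℝ =>
          hyv (fun y => Real.exp ((∑ a : Fin N, θ' a * φ y a) + c)) x)) := by
  refine ⟨fun x => ?_, fun x => ?_, fun x => ?_, fun x => ?_⟩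
  · rw [hyv_exp φ hφ θ c x, key_sum (fun i a => pd i (fun y => φ y a) x) θ]
  · unfold Matrix.IsSymm
    ext a b
    simp only [Matrix.transpose_apply, Matrix.of_apply]
    exact Finset.sum_congr rfl fun i _ => mul_comm _ _
  · rw [Matrix.posSemidef_iff_dotProduct_mulVec]
    constructor
    · unfold Matrix.IsHermitian
      ext a b
      simp only [Matrix.conjTranspose_apply, Matrix.of_apply, star_trivial]
      exact Finset.sum_congr rfl fun i _ => mul_comm _ _
    · intro v
      have hcalc : dotProduct (star v) (Matrix.mulVec (Matrix.of fun a b : Fin N =>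
          ∑ i : Fin d, pd i (fun y => φ y a) x * pd i (fun y => φ y b) x) v)
          = ∑ i, (∑ a, v a * pd i (fun y => φ y a) x)^2 := by
        rw [key_sum (fun i a => pd i (fun y => φ y a) x) v]
        simp only [dotProduct, Matrix.mulVec, Matrix.of_apply, star_trivial,
          Pi.star_apply, dotProduct, Finset.mul_sum]
        refine Finset.sum_congr rfl fun a _ => Finset.sum_congr rfl fun b _ => ?_
        simp only [Finset.sum_mul, Finset.mul_sum]
        exact Finset.sum_congr rfl fun i _ => by ring
      rw [hcalc]
      exact Finset.sum_nonneg fun i _ => sq_nonneg _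
  · have heq : (fun θ' : Fin N → ℝ =>
        hyv (fun y => Real.exp ((∑ a : Fin N, θ' a * φ y a) + c)) x)
        = fun θ' => (1/2) * ∑ i : Fin d, (∑ a, θ' a * pd i (fun y => φ y a) x)^2
            + ∑ a : Fin N, (∑ i : Fin d, pd i (pd i (fun y => φ y a)) x) * θ' a :=
      funext fun θ' => hyv_exp φ hφ θ' c x
    rw [heq]
    have h1 : ConvexOn ℝ Set.univ (fun θ' : Fin N → ℝ =>
        (1/2:ℝ) * ∑ i : Fin d, (∑ a, θ' a * pd i (fun y => φ y a) x)^2) := by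
      have := ConvexOn.smul (c := (1/2:ℝ)) (by norm_num)
        (convexOn_finsum Finset.univ
          (fun i θ' => (∑ a, θ' a * pd i (fun y => φ y a) x)^2)
          (fun i _ => convexOn_sq_linear _))
      simpa [smul_eq_mul] using this
    have h2 : ConvexOn ℝ Set.univ (fun θ' : Fin N → ℝ =>
        ∑ a : Fin N, (∑ i : Fin d, pd i (pd i (fun y => φ y a)) x) * θ' a) :=
      convexOn_linpart _
    simpa [Pi.add_def] using h1.add h2
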